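/- Let H be an r-uniform (q; r, 1)-spread hypergraph on a finite set V with q > 0, and let α ∈ (0,1) with α ≥ 4q. If W' is a random subset of V including each vertex independently with probability α/2, then the probability that W' contains no edge of H is at most 4q/α. -/

import Mathlib

open Finset


-- normalization
lemma aux_norm {V : Type*} [DecidableEq V] (p : ℝ) (u : Finset V) :
    ∑ W ∈ u.powerset, p ^ W.card * (1 - p) ^ (u.card - W.card) = 1 := by
  have h := Finset.prod_add (fun _ : V => p) (fun _ : V => (1 - p)) u
  simp only [add_sub_cancel, Finset.prod_const, one_pow] at h
  have : ∑ t ∈ u.powerset, p ^ t.card * (1 - p) ^ (u \ t).card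
      = ∑ W ∈ u.powerset, p ^ W.card * (1 - p) ^ (u.card - W.card) := by
    refine Finset.sum_congr rfl fun t ht => ?_
    rw [Finset.card_sdiff_of_subset (Finset.mem_powerset.mp ht)]
  rw [this] at h
  exact h.symm

-- containment probability
lemma aux_contain {V : Type*} [DecidableEq V] (p : ℝ) (u A : Finset V) (hA : A ⊆ u) :
    ∑ W ∈ u.powerset.filter (fun W => A ⊆ W),
      p ^ W.card * (1 - p) ^ (u.card - W.card) = p ^ A.card := by
  have key : ∑ W ∈ u.powerset.filter (fun W => A ⊆ W),
      p ^ W.card * (1 - p) ^ (u.card - W.card)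
      = ∑ B ∈ (u \ A).powerset, p ^ (A.card + B.card) * (1 - p) ^ ((u \ A).card - B.card) := by
    refine Finset.sum_nbij' (fun W => W \ A) (fun B => A ∪ B) ?_ ?_ ?_ ?_ ?_
    · intro W hW
      simp only [Finset.mem_filter, Finset.mem_powerset] at hW
      exact Finset.mem_powerset.mpr (Finset.sdiff_subset_sdiff hW.1 le_rfl)
    · intro B hB
      simp only [Finset.mem_powerset] at hB
      simp only [Finset.mem_filter, Finset.mem_powerset]
      exact ⟨Finset.union_subset hA (hB.trans Finset.sdiff_subset), Finset.subset_union_left⟩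
    · intro W hW
      simp only [Finset.mem_filter, Finset.mem_powerset] at hW
      exact Finset.union_sdiff_of_subset hW.2
    · intro B hB
      simp only [Finset.mem_powerset] at hB
      exact Finset.union_sdiff_cancel_left (Finset.disjoint_sdiff.mono_right hB)
    · intro W hW
      simp only [Finset.mem_filter, Finset.mem_powerset] at hW
      have h1 : (W \ A).card = W.card - A.card := Finset.card_sdiff_of_subset hW.2
      have h2 : A.card ≤ W.card := Finset.card_le_card hW.2
      have h3 : W.card ≤ u.card := Finset.card_le_card hW.1
      have h4 : A.card ≤ u.card := Finset.card_le_card hA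
      have h5 : (u \ A).card = u.card - A.card := Finset.card_sdiff_of_subset hA
      congr 1
      · congr 1; omega
      · congr 1; omega
  rw [key]
  have : ∀ B ∈ (u \ A).powerset, p ^ (A.card + B.card) * (1 - p) ^ ((u \ A).card - B.card)
      = p ^ A.card * (p ^ B.card * (1 - p) ^ ((u \ A).card - B.card)) := by
    intro B _; rw [pow_add, mul_assoc]
  rw [Finset.sum_congr rfl this, ← Finset.mul_sum, aux_norm p (u \ A), mul_one]

lemma aux_swap {α β : Type*} (H : Multiset α) (F : Finset β) (g : α → β → ℝ) :
    ∑ W ∈ F, (H.map (fun S => g S W)).sum = (H.map (fun S => ∑ W ∈ F, g S W)).sum := by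
  induction H using Multiset.induction with
  | empty => simp
  | cons a s ih => simp [Finset.sum_add_distrib, ih]

lemma aux_ite {α : Type*} (H : Multiset α) (pred : α → Prop) [DecidablePred pred] (d : ℝ) :
    (H.map (fun T => if pred T then d else 0)).sum = d * (H.filter pred).card := by
  induction H using Multiset.induction with
  | empty => simp
  | cons a s ih =>
    by_cases h : pred a <;> simp [Multiset.filter_cons, h, ih, mul_add] <;> ring

lemma aux_tele (c : ℝ) (j r : ℕ) (hjr : j ≤ r) :
    c ^ j = 1 + ∑ i ∈ range r, (if i + 1 ≤ j then c ^ (i + 1) - c ^ i else 0) := by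
  have h1 : ∑ i ∈ range r, (if i + 1 ≤ j then c ^ (i + 1) - c ^ i else 0)
      = ∑ i ∈ range j, (c ^ (i + 1) - c ^ i) := by
    rw [← Finset.sum_subset (Finset.range_subset_range.mpr hjr)]
    · refine Finset.sum_congr rfl fun i hi => ?_
      rw [if_pos (show i + 1 ≤ j from Finset.mem_range.mp hi)]
    · intro i _ hi
      have := Finset.mem_range.not.mp hi
      rw [if_neg (by omega)]
  rw [h1, Finset.sum_range_sub (fun i => c ^ i)]
  ring

theorem stmt11 {V : Type*} [DecidableEq V] [Fintype V]
    (H : Multiset (Finset V)) (r : ℕ) (q α : ℝ)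
    (hq : 0 < q) (hα0 : 0 < α) (hα1 : α < 1) (hαq : 4 * q ≤ α)
    (hne : H ≠ 0)
    (hunif : ∀ S ∈ H, S.card = r)
    (hspread : ∀ A : Finset V,
      0 < (H.filter (fun S => A ⊆ S)).card →
      1 ≤ A.card → A.card ≤ r → ∀ j : ℕ, 1 ≤ j →
        ((H.filter (fun S => j ≤ (A ∩ S).card)).card : ℝ) ≤ q ^ j * H.card) :
    ∑ W ∈ (univ : Finset V).powerset.filter (fun W => ∀ S ∈ H, ¬ S ⊆ W),
        (α/2) ^ W.card * (1 - α/2) ^ (Fintype.card V - W.card)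
      ≤ 4 * q / α := by
  classical
  obtain ⟨S₀, hS₀⟩ := Multiset.exists_mem_of_ne_zero hne
  rcases Nat.eq_zero_or_pos r with hr0 | hr
  · -- r = 0 : the empty edge is contained in every W, so the sum is empty
    have hSe : S₀ = ∅ := Finset.card_eq_zero.mp (by rw [hunif S₀ hS₀, hr0])
    have hempty : (univ : Finset V).powerset.filter (fun W => ∀ S ∈ H, ¬ S ⊆ W) = ∅ := by
      refine Finset.filter_eq_empty_iff.mpr fun {W} _ => ?_
      push_neg
      exact ⟨S₀, hS₀, hSe ▸ Finset.empty_subset W⟩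
    rw [hempty, Finset.sum_empty]
    positivity
  -- main case r ≥ 1
  set n := Fintype.card V with hn
  set p : ℝ := α / 2 with hp
  set c : ℝ := 4 * q / α with hc
  have hc0 : 0 < c := by positivity
  have hp0 : 0 < p := by positivity
  have hp1 : p < 1 := by rw [hp]; linarith
  have hp1' : 0 < 1 - p := by linarith
  have hpinv : 1 ≤ p⁻¹ := one_le_inv_iff₀.mpr ⟨hp0, hp1.le⟩
  set μ : Finset V → ℝ := fun W => p ^ W.card * (1 - p) ^ (n - W.card) with hμ
  have hμ0 : ∀ W : Finset V, 0 ≤ μ W :=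
    fun W => mul_nonneg (pow_nonneg hp0.le _) (pow_nonneg hp1'.le _)
  have hnorm : ∑ W ∈ (univ : Finset V).powerset, μ W = 1 := by
    simpa [hμ, hn, Finset.card_univ] using aux_norm p (univ : Finset V)
  have hcont : ∀ A : Finset V,
      ∑ W ∈ (univ : Finset V).powerset, (if A ⊆ W then μ W else 0) = p ^ A.card := by
    intro A
    rw [← Finset.sum_filter]
    simpa [hμ, hn, Finset.card_univ] using aux_contain p univ A (Finset.subset_univ A)
  set X : Finset V → ℝ :=
    fun W => (Multiset.map (fun S => if S ⊆ W then (1:ℝ) else 0) H).sum with hX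
  have hXW : ∀ W : Finset V,
      (Multiset.map (fun S => if S ⊆ W then (1:ℝ) else 0) H).sum = X W := fun _ => rfl
  set Hc : ℝ := (Multiset.card H : ℝ) with hHc
  have hHc1 : 1 ≤ Hc := by
    rw [hHc]; exact_mod_cast Multiset.card_pos.mpr hne
  -- E[X]
  have hEX : ∑ W ∈ (univ : Finset V).powerset, μ W * X W = Hc * p ^ r := by
    have h1 : ∀ W : Finset V,
        μ W * X W = (Multiset.map (fun S => if S ⊆ W then μ W else 0) H).sum := by
      intro W
      rw [← hXW W, ← Multiset.sum_map_mul_left]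
      congr 1
      refine Multiset.map_congr rfl fun S _ => ?_
      by_cases h : S ⊆ W <;> simp [h]
    rw [Finset.sum_congr rfl fun W _ => h1 W, aux_swap]
    have h2 : Multiset.map (fun S => ∑ W ∈ (univ : Finset V).powerset,
        (if S ⊆ W then μ W else 0)) H = Multiset.map (fun _ => p ^ r) H :=
      Multiset.map_congr rfl fun S hS => by rw [hcont S, hunif S hS]
    rw [h2, Multiset.map_const', Multiset.sum_replicate, nsmul_eq_mul]
  -- E[X^2]
  have hEX2 : ∑ W ∈ (univ : Finset V).powerset, μ W * (X W * X W)
      = (Multiset.map (fun S =>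
          (Multiset.map (fun T => p ^ (S ∪ T).card) H).sum) H).sum := by
    have h1 : ∀ W : Finset V, μ W * (X W * X W)
        = (Multiset.map (fun S => if S ⊆ W then μ W * X W else 0) H).sum := by
      intro W
      have e1 : (Multiset.map (fun S => if S ⊆ W then μ W * X W else 0) H).sum
          = (Multiset.map (fun S => (if S ⊆ W then (1:ℝ) else 0) * (μ W * X W)) H).sum := by
        congr 1
        refine Multiset.map_congr rfl fun S _ => ?_
        by_cases h : S ⊆ W <;> simp [h]
      rw [e1, Multiset.sum_map_mul_right, hXW W]
      ring
    have h2 : ∀ S : Finset V, ∑ W ∈ (univ : Finset V).powerset,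
        (if S ⊆ W then μ W * X W else 0)
        = (Multiset.map (fun T => p ^ (S ∪ T).card) H).sum := by
      intro S
      have e1 : ∀ W : Finset V, (if S ⊆ W then μ W * X W else 0)
          = (Multiset.map (fun T => if S ∪ T ⊆ W then μ W else 0) H).sum := by
        intro W
        by_cases h : S ⊆ W
        · rw [if_pos h, ← hXW W, ← Multiset.sum_map_mul_left]
          congr 1
          refine Multiset.map_congr rfl fun T _ => ?_
          by_cases h2 : T ⊆ W <;> simp [h, h2, Finset.union_subset_iff]
        · rw [if_neg h]
          symm
          apply Multiset.sum_eq_zero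
          intro x hx
          rw [Multiset.mem_map] at hx
          obtain ⟨T, hT, hTx⟩ := hx
          rw [if_neg (fun hc => h ((Finset.union_subset_iff.mp hc).1))] at hTx
          exact hTx.symm
      rw [Finset.sum_congr rfl fun W _ => e1 W, aux_swap]
      congr 1
      exact Multiset.map_congr rfl fun T _ => hcont (S ∪ T)
    rw [Finset.sum_congr rfl fun W _ => h1 W, aux_swap]
    congr 1
    exact Multiset.map_congr rfl fun S _ => h2 S
  -- geometric bound
  have hx0 : (0:ℝ) ≤ q / p := by positivity
  have hx2 : q / p ≤ 1 / 2 := by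
    rw [div_le_iff₀ hp0, hp]; linarith
  have hgeom : ∑ i ∈ range r, (q / p) ^ (i + 1) ≤ c := by
    have e1 : ∑ i ∈ range r, (q / p) ^ (i + 1) = (q / p) * ∑ i ∈ range r, (q / p) ^ i := by
      rw [Finset.mul_sum]
      exact Finset.sum_congr rfl fun i _ => by rw [pow_succ]; ring
    have e2 : ∑ i ∈ range r, (q / p) ^ i ≤ 2 := by
      calc ∑ i ∈ range r, (q / p) ^ i ≤ ∑ i ∈ range r, ((1:ℝ) / 2) ^ i :=
            Finset.sum_le_sum fun i _ => pow_le_pow_left₀ hx0 hx2 i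
        _ ≤ 2 := sum_geometric_two_le r
    have e3 : (q / p) * 2 = c := by
      rw [hp, hc]; field_simp; ring
    calc ∑ i ∈ range r, (q / p) ^ (i + 1) = (q / p) * ∑ i ∈ range r, (q / p) ^ i := e1
      _ ≤ (q / p) * 2 := by nlinarith
      _ = c := e3
  -- pointwise bound on inner sums
  have hinner : ∀ S ∈ H, (Multiset.map (fun T => p ^ (S ∪ T).card) H).sum
      ≤ p ^ (2 * r) * (Hc * (1 + c)) := by
    intro S hS
    have hSr : S.card = r := hunif S hS
    have e1 : (Multiset.map (fun T => p ^ (S ∪ T).card) H).sum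
        = p ^ (2 * r) * (Multiset.map (fun T => (p⁻¹) ^ (S ∩ T).card) H).sum := by
      rw [← Multiset.sum_map_mul_left]
      congr 1
      refine Multiset.map_congr rfl fun T hT => ?_
      have hcd : (S ∪ T).card + (S ∩ T).card = 2 * r := by
        rw [Finset.card_union_add_card_inter, hSr, hunif T hT]; ring
      have hpr : p ^ (2 * r) = p ^ (S ∪ T).card * p ^ (S ∩ T).card := by
        rw [← pow_add, hcd]
      rw [hpr, inv_pow, mul_assoc, mul_inv_cancel₀ (pow_ne_zero _ hp0.ne'), mul_one]
    rw [e1]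
    have hJ : (Multiset.map (fun T => (p⁻¹) ^ (S ∩ T).card) H).sum ≤ Hc * (1 + c) := by
      have e2 : Multiset.map (fun T => (p⁻¹) ^ (S ∩ T).card) H
          = Multiset.map (fun T => 1 + ∑ i ∈ range r,
              (if i + 1 ≤ (S ∩ T).card then (p⁻¹) ^ (i + 1) - (p⁻¹) ^ i else 0)) H := by
        refine Multiset.map_congr rfl fun T hT => ?_
        refine aux_tele p⁻¹ _ r ?_
        rw [← hunif T hT]
        exact Finset.card_le_card Finset.inter_subset_right
      rw [e2, Multiset.sum_map_add, Multiset.map_const', Multiset.sum_replicate,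
        nsmul_eq_mul, mul_one, ← aux_swap H (range r)
          (fun T i => if i + 1 ≤ (S ∩ T).card then (p⁻¹) ^ (i + 1) - (p⁻¹) ^ i else 0)]
      have e3 : ∀ i ∈ range r,
          (Multiset.map (fun T =>
            if i + 1 ≤ (S ∩ T).card then (p⁻¹) ^ (i + 1) - (p⁻¹) ^ i else 0) H).sum
          = ((p⁻¹) ^ (i + 1) - (p⁻¹) ^ i) *
            ((H.filter (fun T => i + 1 ≤ (S ∩ T).card)).card : ℝ) := by
        intro i _
        exact aux_ite H _ _
      rw [Finset.sum_congr rfl e3]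
      have e4 : ∑ i ∈ range r, ((p⁻¹) ^ (i + 1) - (p⁻¹) ^ i) *
            ((H.filter (fun T => i + 1 ≤ (S ∩ T).card)).card : ℝ)
          ≤ Hc * c := by
        have step : ∀ i ∈ range r, ((p⁻¹) ^ (i + 1) - (p⁻¹) ^ i) *
              ((H.filter (fun T => i + 1 ≤ (S ∩ T).card)).card : ℝ)
            ≤ Hc * (q / p) ^ (i + 1) := by
          intro i _
          have hm : ((H.filter (fun T => i + 1 ≤ (S ∩ T).card)).card : ℝ)
              ≤ q ^ (i + 1) * Hc := by
            refine hspread S ?_ ?_ ?_ (i + 1) (Nat.le_add_left 1 i)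
            · exact Multiset.card_pos_iff_exists_mem.mpr
                ⟨S, Multiset.mem_filter.mpr ⟨hS, subset_rfl⟩⟩
            · rw [hSr]; exact hr
            · rw [hSr]
          have hm0 : (0:ℝ) ≤ ((H.filter (fun T => i + 1 ≤ (S ∩ T).card)).card : ℝ) :=
            Nat.cast_nonneg _
          have hd : (p⁻¹) ^ (i + 1) - (p⁻¹) ^ i ≤ (p⁻¹) ^ (i + 1) := by
            have : (0:ℝ) ≤ (p⁻¹) ^ i := pow_nonneg (by positivity) i
            linarith
          calc ((p⁻¹) ^ (i + 1) - (p⁻¹) ^ i) *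
                ((H.filter (fun T => i + 1 ≤ (S ∩ T).card)).card : ℝ)
              ≤ (p⁻¹) ^ (i + 1) * ((H.filter (fun T => i + 1 ≤ (S ∩ T).card)).card : ℝ) :=
                mul_le_mul_of_nonneg_right hd hm0
            _ ≤ (p⁻¹) ^ (i + 1) * (q ^ (i + 1) * Hc) := by
                refine mul_le_mul_of_nonneg_left hm (pow_nonneg (by positivity) _)
            _ = Hc * (q / p) ^ (i + 1) := by
                rw [div_pow, div_eq_mul_inv, ← inv_pow]; ring
        calc ∑ i ∈ range r, ((p⁻¹) ^ (i + 1) - (p⁻¹) ^ i) *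
              ((H.filter (fun T => i + 1 ≤ (S ∩ T).card)).card : ℝ)
            ≤ ∑ i ∈ range r, Hc * (q / p) ^ (i + 1) := Finset.sum_le_sum step
          _ = Hc * ∑ i ∈ range r, (q / p) ^ (i + 1) := by rw [Finset.mul_sum]
          _ ≤ Hc * c := by nlinarith [hgeom, hHc1]
      linarith [e4]
    have hp2r : (0:ℝ) ≤ p ^ (2 * r) := pow_nonneg hp0.le _
    exact mul_le_mul_of_nonneg_left hJ hp2r
  -- second moment bound
  have hE2 : ∑ W ∈ (univ : Finset V).powerset, μ W * (X W * X W)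
      ≤ (Hc * p ^ r) * (Hc * p ^ r) * (1 + c) := by
    rw [hEX2]
    calc (Multiset.map (fun S =>
          (Multiset.map (fun T => p ^ (S ∪ T).card) H).sum) H).sum
        ≤ (Multiset.map (fun _ => p ^ (2 * r) * (Hc * (1 + c))) H).sum :=
          Multiset.sum_map_le_sum_map _ _ hinner
      _ = Hc * (p ^ (2 * r) * (Hc * (1 + c))) := by
          rw [Multiset.map_const', Multiset.sum_replicate, nsmul_eq_mul]
      _ = (Hc * p ^ r) * (Hc * p ^ r) * (1 + c) := by
          rw [two_mul, pow_add]; ring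
  -- Chebyshev
  have hE0 : 0 < Hc * p ^ r := mul_pos (lt_of_lt_of_le one_pos hHc1) (pow_pos hp0 r)
  have hvar : ∑ W ∈ (univ : Finset V).powerset, μ W * (X W - Hc * p ^ r) ^ 2
      ≤ c * ((Hc * p ^ r) * (Hc * p ^ r)) := by
    have expand : ∀ W : Finset V, μ W * (X W - Hc * p ^ r) ^ 2
        = μ W * (X W * X W) - 2 * (Hc * p ^ r) * (μ W * X W)
          + ((Hc * p ^ r) * (Hc * p ^ r)) * μ W := fun W => by ring
    rw [Finset.sum_congr rfl fun W _ => expand W, Finset.sum_add_distrib,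
      Finset.sum_sub_distrib, ← Finset.mul_sum, ← Finset.mul_sum, hEX, hnorm, mul_one]
    nlinarith [hE2]
  have hbad : ∀ W ∈ (univ : Finset V).powerset.filter (fun W => ∀ S ∈ H, ¬ S ⊆ W),
      X W = 0 := by
    intro W hW
    rw [Finset.mem_filter] at hW
    rw [← hXW W]
    apply Multiset.sum_eq_zero
    intro x hx
    rw [Multiset.mem_map] at hx
    obtain ⟨T, hT, hTx⟩ := hx
    rw [if_neg (hW.2 T hT)] at hTx
    exact hTx.symm
  have hP0 : (∑ W ∈ (univ : Finset V).powerset.filter (fun W => ∀ S ∈ H, ¬ S ⊆ W), μ W)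
      * ((Hc * p ^ r) * (Hc * p ^ r))
      ≤ c * ((Hc * p ^ r) * (Hc * p ^ r)) := by
    calc (∑ W ∈ (univ : Finset V).powerset.filter (fun W => ∀ S ∈ H, ¬ S ⊆ W), μ W)
          * ((Hc * p ^ r) * (Hc * p ^ r))
        = ∑ W ∈ (univ : Finset V).powerset.filter (fun W => ∀ S ∈ H, ¬ S ⊆ W),
            μ W * ((Hc * p ^ r) * (Hc * p ^ r)) := by rw [Finset.sum_mul]
      _ = ∑ W ∈ (univ : Finset V).powerset.filter (fun W => ∀ S ∈ H, ¬ S ⊆ W),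
            μ W * (X W - Hc * p ^ r) ^ 2 :=
          Finset.sum_congr rfl fun W hW => by rw [hbad W hW]; ring
      _ ≤ ∑ W ∈ (univ : Finset V).powerset, μ W * (X W - Hc * p ^ r) ^ 2 :=
          Finset.sum_le_sum_of_subset_of_nonneg (Finset.filter_subset _ _)
            (fun W _ _ => mul_nonneg (hμ0 W) (sq_nonneg _))
      _ ≤ c * ((Hc * p ^ r) * (Hc * p ^ r)) := hvar
  have final : ∑ W ∈ (univ : Finset V).powerset.filter (fun W => ∀ S ∈ H, ¬ S ⊆ W), μ W
      ≤ c := le_of_mul_le_mul_right hP0 (mul_pos hE0 hE0)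
  exact final
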